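/- Assume R is sufficiently large. Let d be a nonnegative integer and let e : R → ℤ be a function with e(α) ≥ 0 for all α ∈ R and Σ_{α∈R} e(α) = 2d. Then e is admissible of degree d (i.e., ∏_{α∈R} α^{e(α)} = q^d) if and only if ∏_{α∈R} (α²/q)^{e(α)} is a root of unity. -/

import Mathlib

open Finset

lemma zpow_sum_aux {ι : Type*} {G₀ : Type*} [CommGroupWithZero G₀] (a : G₀) (ha : a ≠ 0)
    (s : Finset ι) (f : ι → ℤ) : ∏ i ∈ s, a ^ f i = a ^ (∑ i ∈ s, f i) := by
  classical
  induction s using Finset.induction with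
  | empty => simp
  | insert _ _ hx ih =>
    rw [Finset.prod_insert hx, Finset.sum_insert hx, zpow_add₀ ha, ih]

/-- Assume `R` is sufficiently large (the subgroup `Γ ≤ ℂˣ` generated by `R`
contains no root of unity other than `1`). Let `d ≥ 0` and let `e : R → ℤ` be nonnegative with
`∑_{α∈R} e α = 2d`. Then `∏_{α∈R} α^{e α} = q^d` if and only if `∏_{α∈R} (α²/q)^{e α}` is a
root of unity. -/
theorem stmt_13 (q : ℤ) (hq : 2 ≤ q) (R : Finset ℂ) (hRne : R.Nonempty)
    (hR0 : ∀ α ∈ R, α ≠ 0)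
    (habs : ∀ α ∈ R, ‖α‖ ^ 2 = (q : ℝ))
    (hconj : ∀ α ∈ R, (q : ℂ) / α ∈ R)
    (hlarge : ∀ x : ℂˣ, x ∈ Subgroup.closure {y : ℂˣ | (y : ℂ) ∈ R} →
      (∃ n : ℕ, 0 < n ∧ x ^ n = 1) → x = 1)
    (d : ℕ) (e : ℂ → ℤ)
    (he0 : ∀ α ∈ R, 0 ≤ e α)
    (hsum : ∑ α ∈ R, e α = 2 * (d : ℤ)) :
    (∏ α ∈ R, α ^ e α = (q : ℂ) ^ (d : ℤ)) ↔
      ∃ n : ℕ, 0 < n ∧ (∏ α ∈ R, (α ^ 2 / (q : ℂ)) ^ e α) ^ n = 1 := by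
  have hq0 : (q : ℂ) ≠ 0 := by
    exact_mod_cast (by omega : q ≠ 0)
  -- key identity
  have hqq : (q : ℂ) ^ (2 * (d : ℤ)) = ((q : ℂ) ^ (d : ℤ)) ^ 2 := by
    rw [two_mul, zpow_add₀ hq0, sq]
  have key : ∏ α ∈ R, (α ^ 2 / (q : ℂ)) ^ e α
      = (∏ α ∈ R, α ^ e α) ^ 2 / (q : ℂ) ^ (2 * (d : ℤ)) := by
    calc ∏ α ∈ R, (α ^ 2 / (q : ℂ)) ^ e α
        = ∏ α ∈ R, ((α ^ e α) ^ 2 / (q : ℂ) ^ e α) := by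
          refine Finset.prod_congr rfl fun α hα => ?_
          rw [div_zpow, ← zpow_natCast α 2, ← zpow_mul, mul_comm, zpow_mul, zpow_natCast]
      _ = (∏ α ∈ R, α ^ e α) ^ 2 / ∏ α ∈ R, (q : ℂ) ^ e α := by
          rw [Finset.prod_div_distrib, Finset.prod_pow]
      _ = (∏ α ∈ R, α ^ e α) ^ 2 / (q : ℂ) ^ (2 * (d : ℤ)) := by
          rw [zpow_sum_aux _ hq0, hsum]
  constructor
  · intro h
    refine ⟨1, one_pos, ?_⟩
    rw [pow_one, key, h, hqq, div_self (pow_ne_zero _ (zpow_ne_zero _ hq0))]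
  · rintro ⟨n, hn, h1⟩
    set S : Set ℂˣ := {y : ℂˣ | (y : ℂ) ∈ R} with hS
    have hmem : ∀ α (hα : α ∈ R), Units.mk0 α (hR0 α hα) ∈ Subgroup.closure S :=
      fun α hα => Subgroup.subset_closure hα
    have hPne : (∏ α ∈ R, α ^ e α) ≠ 0 :=
      Finset.prod_ne_zero_iff.2 fun α hα => zpow_ne_zero _ (hR0 α hα)
    set uP : ℂˣ := Units.mk0 _ hPne with huPdef
    have huP : uP ∈ Subgroup.closure S := by
      have heq : uP = ∏ α ∈ R.attach, (Units.mk0 α.1 (hR0 α.1 α.2)) ^ e α.1 := by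
        apply Units.ext
        push_cast
        simp only [huPdef, Units.val_mk0]
        exact (Finset.prod_attach R fun α => α ^ e α).symm
      rw [heq]
      exact Subgroup.prod_mem _ fun α _ => Subgroup.zpow_mem _ (hmem α.1 α.2) _
    obtain ⟨α₀, hα₀⟩ := hRne
    have hqα₀ : (q : ℂ) / α₀ ≠ 0 := div_ne_zero hq0 (hR0 α₀ hα₀)
    set uq : ℂˣ := Units.mk0 _ hq0 with huqdef
    have huq : uq ∈ Subgroup.closure S := by
      have heq : uq = Units.mk0 α₀ (hR0 α₀ hα₀) * Units.mk0 _ hqα₀ := by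
        apply Units.ext
        push_cast
        simp only [huqdef, Units.val_mk0]
        rw [mul_div_assoc']
        rw [mul_comm, mul_div_assoc, div_self (hR0 α₀ hα₀), mul_one]
      rw [heq]
      exact Subgroup.mul_mem _ (hmem α₀ hα₀) (hmem _ (hconj α₀ hα₀))
    set x : ℂˣ := uP * uq ^ (-(d : ℤ)) with hxdef
    have hxmem : x ∈ Subgroup.closure S :=
      Subgroup.mul_mem _ huP (Subgroup.zpow_mem _ huq _)
    have hxval : (x : ℂ) = (∏ α ∈ R, α ^ e α) * (q : ℂ) ^ (-(d : ℤ)) := by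
      rw [hxdef, Units.val_mul]
      simp [huPdef, huqdef]
    have hqd2 : ((q : ℂ) ^ (-(d : ℤ))) ^ 2 = ((q : ℂ) ^ (2 * (d : ℤ)))⁻¹ := by
      rw [← zpow_natCast ((q : ℂ) ^ (-(d : ℤ))) 2, ← zpow_mul, ← zpow_neg]
      congr 1
      push_cast
      ring
    have hx2 : ((x : ℂ)) ^ 2 = ∏ α ∈ R, (α ^ 2 / (q : ℂ)) ^ e α := by
      rw [hxval, mul_pow, hqd2, key, div_eq_mul_inv]
    have hxpow : x ^ (2 * n) = 1 := by
      apply Units.ext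
      rw [Units.val_pow_eq_pow_val, Units.val_one, pow_mul, hx2, h1]
    have hx1 : x = 1 := hlarge x hxmem ⟨2 * n, by omega, hxpow⟩
    have hval : (∏ α ∈ R, α ^ e α) * (q : ℂ) ^ (-(d : ℤ)) = 1 := by
      have h := congrArg Units.val hx1
      rw [hxval, Units.val_one] at h
      exact h
    rw [zpow_neg] at hval
    rwa [mul_inv_eq_one₀ (zpow_ne_zero _ hq0)] at hval
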